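/- Let r > 0, T > 0, and set A₁ := 1 + 2r − 2√(r² + r), B₁ := 1 + 2r + 2√(r² + r), and κ := √(r² + r). Then the function y(t) := A₁·B₁·(e^{κ(T − t)} − 1)/(B₁·e^{κ(T − t)} − A₁) is the unique differentiable solution on [0,T] of the terminal value problem y'(t) + ¼(A₁ − y(t))(B₁ − y(t)) = 0, y(T) = 0; moreover 0 ≤ y(t) < A₁ for all t ∈ [0,T] and y is nonincreasing on [0,T]. -/

import Mathlib

open Set Real


/-- The explicit solution `y(t) = A₁B₁(e^{κ(T−t)} − 1)/(B₁e^{κ(T−t)} − A₁)` of the terminal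
value problem `y' + ¼(A₁ − y)(B₁ − y) = 0, y(T) = 0`, with `κ = √(r² + r)`,
`A₁ = 1 + 2r − 2κ`, `B₁ = 1 + 2r + 2κ`. -/
noncomputable def ricY (r T t : ℝ) : ℝ :=
  (1 + 2 * r - 2 * Real.sqrt (r ^ 2 + r)) * (1 + 2 * r + 2 * Real.sqrt (r ^ 2 + r)) *
      (Real.exp (Real.sqrt (r ^ 2 + r) * (T - t)) - 1) /
    ((1 + 2 * r + 2 * Real.sqrt (r ^ 2 + r)) * Real.exp (Real.sqrt (r ^ 2 + r) * (T - t)) -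
      (1 + 2 * r - 2 * Real.sqrt (r ^ 2 + r)))

/-- `ricY r T` is the unique differentiable solution on `[0, T]` of
`y' + ¼(A₁ − y)(B₁ − y) = 0`, `y(T) = 0`; moreover `0 ≤ y(t) < A₁` on `[0, T]` and `y` is
nonincreasing on `[0, T]`. -/
theorem ricY_unique_solution (r T : ℝ) (hr : 0 < r) (hT : 0 < T) :
    (∀ t ∈ Set.Icc (0 : ℝ) T,
      HasDerivWithinAt (ricY r T)
        (-((1 / 4) * ((1 + 2 * r - 2 * Real.sqrt (r ^ 2 + r)) - ricY r T t) *
          ((1 + 2 * r + 2 * Real.sqrt (r ^ 2 + r)) - ricY r T t)))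
        (Set.Icc 0 T) t) ∧
    ricY r T T = 0 ∧
    (∀ y y' : ℝ → ℝ,
      (∀ t ∈ Set.Icc (0 : ℝ) T, HasDerivWithinAt y (y' t) (Set.Icc 0 T) t) →
      (∀ t ∈ Set.Icc (0 : ℝ) T,
        y' t + (1 / 4) * ((1 + 2 * r - 2 * Real.sqrt (r ^ 2 + r)) - y t) *
          ((1 + 2 * r + 2 * Real.sqrt (r ^ 2 + r)) - y t) = 0) →
      y T = 0 →
      ∀ t ∈ Set.Icc (0 : ℝ) T, y t = ricY r T t) ∧
    (∀ t ∈ Set.Icc (0 : ℝ) T,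
      0 ≤ ricY r T t ∧ ricY r T t < 1 + 2 * r - 2 * Real.sqrt (r ^ 2 + r)) ∧
    AntitoneOn (ricY r T) (Set.Icc 0 T) := by
  have hrr : (0:ℝ) < r ^ 2 + r := by nlinarith
  set κ : ℝ := Real.sqrt (r ^ 2 + r) with hκ
  have hκ0 : 0 < κ := Real.sqrt_pos.2 hrr
  have hκlt : 2 * κ < 1 + 2 * r := by
    have : κ < (1 + 2 * r) / 2 := (Real.sqrt_lt' (by linarith)).2 (by nlinarith)
    linarith
  have ha0 : 0 < 1 + 2 * r - 2 * κ := by linarith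
  have hb0 : 0 < 1 + 2 * r + 2 * κ := by linarith
  -- rewriting of ricY in terms of κ
  have hy : ∀ t, ricY r T t =
      (1 + 2 * r - 2 * κ) * (1 + 2 * r + 2 * κ) * (Real.exp (κ * (T - t)) - 1) /
        ((1 + 2 * r + 2 * κ) * Real.exp (κ * (T - t)) - (1 + 2 * r - 2 * κ)) := by
    intro t; rw [hκ]; rfl
  -- positivity of denominator and basic exp facts for t ≤ T
  have hE1 : ∀ t : ℝ, t ≤ T → 1 ≤ Real.exp (κ * (T - t)) := fun t ht =>
    Real.one_le_exp (mul_nonneg hκ0.le (by linarith))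
  have hdpos : ∀ t : ℝ, t ≤ T →
      0 < (1 + 2 * r + 2 * κ) * Real.exp (κ * (T - t)) - (1 + 2 * r - 2 * κ) := by
    intro t ht
    have h1 := hE1 t ht
    nlinarith
  -- the key derivative computation (full HasDerivAt)
  have key : ∀ t : ℝ, t ≤ T →
      HasDerivAt (ricY r T)
        (-((1 / 4) * ((1 + 2 * r - 2 * κ) - ricY r T t) *
          ((1 + 2 * r + 2 * κ) - ricY r T t))) t := by
    intro t ht
    have hd := hdpos t ht
    have h1 : HasDerivAt (fun s : ℝ => κ * (T - s)) (-κ) t := by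
      simpa using ((hasDerivAt_id t).const_sub T).const_mul κ
    have hE : HasDerivAt (fun s : ℝ => Real.exp (κ * (T - s)))
        (Real.exp (κ * (T - t)) * -κ) t := h1.exp
    have hN : HasDerivAt
        (fun s : ℝ => (1 + 2 * r - 2 * κ) * (1 + 2 * r + 2 * κ) * (Real.exp (κ * (T - s)) - 1))
        ((1 + 2 * r - 2 * κ) * (1 + 2 * r + 2 * κ) * (Real.exp (κ * (T - t)) * -κ)) t :=
      (hE.sub_const 1).const_mul _
    have hD : HasDerivAt
        (fun s : ℝ => (1 + 2 * r + 2 * κ) * Real.exp (κ * (T - s)) - (1 + 2 * r - 2 * κ))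
        ((1 + 2 * r + 2 * κ) * (Real.exp (κ * (T - t)) * -κ)) t :=
      (hE.const_mul _).sub_const _
    have hq := hN.div hD hd.ne'
    have hfun : ricY r T = fun s : ℝ =>
        (1 + 2 * r - 2 * κ) * (1 + 2 * r + 2 * κ) * (Real.exp (κ * (T - s)) - 1) /
          ((1 + 2 * r + 2 * κ) * Real.exp (κ * (T - s)) - (1 + 2 * r - 2 * κ)) := by
      funext s; exact hy s
    rw [hfun]
    refine hq.congr_deriv ?_
    beta_reduce
    have hEpos := Real.exp_pos (κ * (T - t))
    field_simp
    ring
  -- terminal value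
  have hT0 : ricY r T T = 0 := by
    rw [hy T]; simp
  -- bounds
  have hbound : ∀ t ∈ Icc (0:ℝ) T, 0 ≤ ricY r T t ∧ ricY r T t < 1 + 2 * r - 2 * κ := by
    intro t ht
    have hd := hdpos t ht.2
    have h1 := hE1 t ht.2
    rw [hy t]
    constructor
    · apply div_nonneg _ hd.le
      nlinarith [mul_nonneg (mul_nonneg ha0.le hb0.le) (sub_nonneg.2 h1)]
    · rw [div_lt_iff₀ hd]
      nlinarith
  -- continuity
  have hcont : ContinuousOn (ricY r T) (Icc 0 T) := fun t ht =>
    (key t ht.2).continuousAt.continuousWithinAt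
  refine ⟨fun t ht => (key t ht.2).hasDerivWithinAt, hT0, ?_, hbound, ?_⟩
  · -- uniqueness
    intro y y' hy' heq hyT
    have hycont : ContinuousOn y (Icc 0 T) := fun t ht => (hy' t ht).continuousWithinAt
    obtain ⟨M1, hM1⟩ := isCompact_Icc.exists_bound_of_continuousOn hycont
    obtain ⟨M2, hM2⟩ := isCompact_Icc.exists_bound_of_continuousOn hcont
    set R : ℝ := max M1 M2 with hR
    have hR0 : 0 ≤ R := le_trans (norm_nonneg (y 0)) (le_trans (hM1 0 ⟨le_refl 0, hT.le⟩) (le_max_left _ _))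
    set v : ℝ → ℝ → ℝ := fun _ x => -((1 / 4) * ((1 + 2 * r - 2 * κ) - x) * ((1 + 2 * r + 2 * κ) - x)) with hv
    set Kr : ℝ := (|2 * (1 + 2 * r)| + 2 * R) / 4 with hKr
    have hKr0 : 0 ≤ Kr := by positivity
    set K : NNReal := ⟨Kr, hKr0⟩ with hK
    have hlip : ∀ t : ℝ, LipschitzOnWith K (v t) (Metric.closedBall (0:ℝ) R) := by
      intro t
      apply Convex.lipschitzOnWith_of_nnnorm_hasDerivWithin_le (convex_closedBall _ _)
        (f' := fun x => (1 / 4) * (2 * (1 + 2 * r) - 2 * x))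
      · intro x hx
        have : HasDerivAt (v t) ((1 / 4) * (2 * (1 + 2 * r) - 2 * x)) x := by
          have h := (((hasDerivAt_id x).const_sub (1 + 2 * r - 2 * κ)).mul
            ((hasDerivAt_id x).const_sub (1 + 2 * r + 2 * κ))).const_mul (1/4 : ℝ)
          have h2 := h.neg
          simp only [id_eq, ← mul_assoc] at h2
          refine (h2.congr_deriv (by ring)).congr_of_eventuallyEq (Filter.Eventually.of_forall fun y => ?_)
          simp only [hv, Pi.neg_apply, Pi.mul_apply]
          ring
        exact this.hasDerivWithinAt
      · intro x hx
        rw [Metric.mem_closedBall, Real.dist_eq, sub_zero] at hx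
        rw [← NNReal.coe_le_coe, coe_nnnorm, Real.norm_eq_abs]
        show |(1 / 4 : ℝ) * (2 * (1 + 2 * r) - 2 * x)| ≤ (|2 * (1 + 2 * r)| + 2 * R) / 4
        have h1 : |x| ≤ R := hx
        rw [abs_mul, abs_of_nonneg (by norm_num : (0:ℝ) ≤ (1/4:ℝ))]
        have h3 : |2 * (1 + 2 * r) - 2 * x| ≤ |2 * (1 + 2 * r)| + |2 * x| := abs_sub _ _
        have h4 : |2 * x| = 2 * |x| := by rw [abs_mul, abs_two]
        linarith
    have hmem : ∀ s : ℝ, s ∈ Icc (0:ℝ) T → Icc (0:ℝ) T ∈ nhdsWithin s (Iic s) → True := fun _ _ _ => trivial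
    have huniq := ODE_solution_unique_of_mem_Icc_left (v := v)
      (s := fun _ => Metric.closedBall (0:ℝ) R) (K := K) (fun t _ => hlip t)
      hycont
      (fun t ht => by
        have h1 : Icc (0:ℝ) T ∈ nhdsWithin t (Iic t) := Icc_mem_nhdsLE_of_mem ht
        have h2 := (hy' t ⟨ht.1.le, ht.2⟩).mono_of_mem_nhdsWithin h1
        have h3 : y' t = v t (y t) := by
          have := heq t ⟨ht.1.le, ht.2⟩
          simp only [hv]; linarith
        rwa [h3] at h2)
      (fun t ht => by
        rw [Metric.mem_closedBall, Real.dist_eq, sub_zero]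
        have := hM1 t ⟨ht.1.le, ht.2⟩
        rw [Real.norm_eq_abs] at this
        exact this.trans (le_max_left _ _))
      hcont
      (fun t ht => by
        have h2 := (key t ht.2).hasDerivWithinAt (s := Iic t)
        exact h2)
      (fun t ht => by
        rw [Metric.mem_closedBall, Real.dist_eq, sub_zero]
        have := hM2 t ⟨ht.1.le, ht.2⟩
        rw [Real.norm_eq_abs] at this
        exact this.trans (le_max_right _ _))
      (by rw [hyT, hT0])
    exact fun t ht => huniq ht
  · -- antitone
    apply antitoneOn_of_deriv_nonpos (convex_Icc 0 T) hcont
    · intro x hx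
      rw [interior_Icc] at hx
      exact (key x hx.2.le).differentiableAt.differentiableWithinAt
    · intro x hx
      rw [interior_Icc] at hx
      rw [(key x hx.2.le).deriv]
      obtain ⟨h0, hA⟩ := hbound x ⟨hx.1.le, hx.2.le⟩
      nlinarith
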